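/- If there exists a Banach space Y such that every uniformly p-convergent subset of K(X,Y) is equicompact, then C_p(X,Y) = K(X,Y). -/

import Mathlib

open Filter Topology Metric Bornology ENNReal

noncomputable section

universe u v w

variable {X : Type*} {Y : Type*} {Z : Type*}

section Defs
variable [NormedAddCommGroup X] [NormedSpace ℝ X]
variable [NormedAddCommGroup Y] [NormedSpace ℝ Y]

/-- A sequence is weakly `p`-summable if `(x*(xₙ))ₙ ∈ ℓ_p` for every functional `x*`;
for `p = ∞` we use weakly null sequences. -/
def WeaklyPSummable (p : ℝ≥0∞) (x : ℕ → X) : Prop :=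
  if p = ⊤ then ∀ f : X →L[ℝ] ℝ, Tendsto (fun n => f (x n)) atTop (𝓝 0)
  else ∀ f : X →L[ℝ] ℝ, Memℓp (fun n => f (x n)) p

/-- A set of operators is uniformly `p`-convergent if every weakly `p`-summable
sequence converges to `0` uniformly on the set. -/
def UnifPConvergent (p : ℝ≥0∞) (K : Set (X →L[ℝ] Y)) : Prop :=
  ∀ x : ℕ → X, WeaklyPSummable p x →
    ∀ ε > (0 : ℝ), ∃ N : ℕ, ∀ n ≥ N, ∀ T ∈ K, ‖T (x n)‖ < ε

/-- A `p`-convergent operator maps weakly `p`-summable sequences to norm-null sequences. -/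
def PConvergentOp (p : ℝ≥0∞) (T : X →L[ℝ] Y) : Prop :=
  ∀ x : ℕ → X, WeaklyPSummable p x → Tendsto (fun n => ‖T (x n)‖) atTop (𝓝 0)

/-- A sequence is weakly `p`-Cauchy if all differences along pairs of increasing
index sequences are weakly `p`-summable. -/
def WeaklyPCauchy (p : ℝ≥0∞) (x : ℕ → X) : Prop :=
  ∀ m k : ℕ → ℕ, StrictMono m → StrictMono k →
    WeaklyPSummable p (fun n => x (m n) - x (k n))

/-- A set is weakly `p`-precompact if every sequence in it has a weakly `p`-Cauchy
subsequence. -/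
def WeaklyPPrecompact (p : ℝ≥0∞) (A : Set X) : Prop :=
  ∀ x : ℕ → X, (∀ n, x n ∈ A) →
    ∃ s : ℕ → ℕ, StrictMono s ∧ WeaklyPCauchy p (fun n => x (s n))

/-- `B` is `U`-bounded: bounded and with positive distance to the boundary of `U`. -/
def UBounded (U B : Set X) : Prop :=
  IsBounded B ∧ B ⊆ U ∧ ∃ d > (0 : ℝ), ∀ x ∈ B, ball x d ⊆ U

/-- A set of operators is equicompact if every bounded sequence has a subsequence on
which the operators converge in norm, uniformly on the set. -/
def Equicompact (M : Set (X →L[ℝ] Y)) : Prop :=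
  ∀ x : ℕ → X, IsBounded (Set.range x) →
    ∃ s : ℕ → ℕ, StrictMono s ∧ ∃ g : (X →L[ℝ] Y) → Y,
      TendstoUniformlyOn (fun n T => T (x (s n))) g atTop M

/-- A set of operators is weakly equicompact if every bounded sequence has a
subsequence on which the operators converge weakly, uniformly on the set. -/
def WeaklyEquicompact (M : Set (X →L[ℝ] Y)) : Prop :=
  ∀ x : ℕ → X, IsBounded (Set.range x) →
    ∃ s : ℕ → ℕ, StrictMono s ∧ ∀ φ : Y →L[ℝ] ℝ, ∃ c : (X →L[ℝ] Y) → ℝ,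
      TendstoUniformlyOn (fun n T => φ (T (x (s n)))) c atTop M

/-- A weakly compact operator: the image of every bounded sequence has a weakly
convergent subsequence. -/
def WeaklyCompactOp (T : X →L[ℝ] Y) : Prop :=
  ∀ x : ℕ → X, IsBounded (Set.range x) →
    ∃ s : ℕ → ℕ, StrictMono s ∧ ∃ y : Y,
      ∀ φ : Y →L[ℝ] ℝ, Tendsto (fun n => φ (T (x (s n)))) atTop (𝓝 (φ y))

/-- A space has the `p`-Schur property if weakly `p`-summable sequences are norm null. -/
def PSchur (p : ℝ≥0∞) (W : Type*) [NormedAddCommGroup W] [NormedSpace ℝ W] : Prop :=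
  ∀ x : ℕ → W, WeaklyPSummable p x → Tendsto (fun n => ‖x n‖) atTop (𝓝 0)

/-- A set is relatively weakly `p`-compact if every sequence in it has a subsequence
weakly `p`-convergent to a point of the space. -/
def RelWeaklyPCompact (p : ℝ≥0∞) (A : Set X) : Prop :=
  ∀ x : ℕ → X, (∀ n, x n ∈ A) →
    ∃ s : ℕ → ℕ, StrictMono s ∧ ∃ a : X, WeaklyPSummable p (fun n => x (s n) - a)

/-- `f` is weakly `p`-sequentially continuous on `U` if it maps `U`-bounded weakly
`p`-Cauchy sequences to norm convergent sequences. -/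
def WeaklyPSeqContinuous (p : ℝ≥0∞) (U : Set X) (f : X → Y) : Prop :=
  ∀ x : ℕ → X, (∀ n, x n ∈ U) → UBounded U (Set.range x) → WeaklyPCauchy p x →
    ∃ y : Y, Tendsto (fun n => f (x n)) atTop (𝓝 y)

end Defs

section Aux
variable [NormedAddCommGroup X] [NormedSpace ℝ X]
variable [NormedAddCommGroup Y] [NormedSpace ℝ Y]

/-- For finite `p ≥ 1`, weakly `p`-summable sequences are weakly null. -/
lemma aux_weakly_null {p : ℝ≥0∞} (hp0 : p ≠ 0) (hp' : p ≠ ⊤) {x : ℕ → X}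
    (hx : WeaklyPSummable p x) (f : X →L[ℝ] ℝ) :
    Tendsto (fun n => f (x n)) atTop (𝓝 0) := by
  rw [WeaklyPSummable, if_neg hp'] at hx
  have hq : 0 < p.toReal := ENNReal.toReal_pos hp0 hp'
  have hs : Summable fun n => ‖f (x n)‖ ^ p.toReal := (hx f).summable hq
  have h0 : Tendsto (fun n => ‖f (x n)‖ ^ p.toReal) atTop (𝓝 0) := hs.tendsto_atTop_zero
  have h1 : Tendsto (fun n => (‖f (x n)‖ ^ p.toReal) ^ p.toReal⁻¹) atTop
      (𝓝 ((0 : ℝ) ^ p.toReal⁻¹)) :=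
    ((Real.continuousAt_rpow_const 0 p.toReal⁻¹
      (Or.inr (inv_nonneg.2 hq.le))).tendsto).comp h0
  rw [Real.zero_rpow (by positivity)] at h1
  have h2 : Tendsto (fun n => ‖f (x n)‖) atTop (𝓝 0) :=
    h1.congr fun n => Real.rpow_rpow_inv (norm_nonneg _) hq.ne'
  exact tendsto_zero_iff_norm_tendsto_zero.mpr h2

/-- Weakly null sequences are bounded (uniform boundedness principle). -/
lemma aux_bounded {x : ℕ → X}
    (hx : ∀ f : X →L[ℝ] ℝ, Tendsto (fun n => f (x n)) atTop (𝓝 0)) :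
    IsBounded (Set.range x) := by
  set g : ℕ → StrongDual ℝ X →L[ℝ] ℝ :=
    fun n => NormedSpace.inclusionInDoubleDual ℝ X (x n) with hg
  have hb : ∀ f : StrongDual ℝ X, ∃ C, ∀ n, ‖g n f‖ ≤ C := by
    intro f
    have h1 : Tendsto (fun n => ‖f (x n)‖) atTop (𝓝 ‖(0 : ℝ)‖) := (hx f).norm
    obtain ⟨C, hC⟩ := h1.bddAbove_range
    exact ⟨C, fun n => by
      simpa [hg, NormedSpace.dual_def] using hC ⟨n, rfl⟩⟩
  obtain ⟨C', hC'⟩ := banach_steinhaus hb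
  refine isBounded_iff_forall_norm_le.2 ⟨C', ?_⟩
  rintro w ⟨n, rfl⟩
  have h2 := hC' n
  rwa [show g n = (NormedSpace.inclusionInDoubleDualLi ℝ (E := X)) (x n) from rfl,
    (NormedSpace.inclusionInDoubleDualLi ℝ (E := X)).norm_map] at h2

/-- A compact operator maps bounded sequences to sequences with convergent subsequences. -/
lemma aux_subseq_conv {T : X →L[ℝ] Y} (hT : IsCompactOperator T) {x : ℕ → X}
    (hx : IsBounded (Set.range x)) :
    ∃ s : ℕ → ℕ, StrictMono s ∧ ∃ y : Y,
      Tendsto (fun n => T (x (s n))) atTop (𝓝 y) := by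
  obtain ⟨R, hR⟩ := isBounded_iff_forall_norm_le.1 hx
  have hT' : IsCompactOperator ⇑(T : X →ₗ[ℝ] Y) := by
    simpa using hT
  obtain ⟨K, hK, hTK⟩ := hT'.image_closedBall_subset_compact R
  have hmem : ∀ n, T (x n) ∈ K := fun n => hTK
    ⟨x n, by simpa [Metric.mem_closedBall, dist_zero_right] using hR (x n) ⟨n, rfl⟩, rfl⟩
  obtain ⟨y, -, s, hs, hconv⟩ := hK.tendsto_subseq hmem
  exact ⟨s, hs, y, hconv⟩

/-- A rank-one operator is compact. -/
lemma aux_rank_one_compact (f : X →L[ℝ] ℝ) (y : Y) :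
    IsCompactOperator (f.smulRight y) := by
  have hf : IsCompactOperator (⇑f) := by
    refine ⟨Metric.closedBall 0 ‖f‖, isCompact_closedBall _ _, ?_⟩
    refine Filter.mem_of_superset (Metric.ball_mem_nhds 0 one_pos) ?_
    intro z hz
    rw [Metric.mem_ball, dist_zero_right] at hz
    simp only [Set.mem_preimage, Metric.mem_closedBall, dist_zero_right]
    calc ‖f z‖ ≤ ‖f‖ * ‖z‖ := f.le_opNorm z
      _ ≤ ‖f‖ * 1 := mul_le_mul_of_nonneg_left hz.le (norm_nonneg f)
      _ = ‖f‖ := mul_one _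
  have hcoe : ⇑(f.smulRight y) = (fun t : ℝ => t • y) ∘ ⇑f := by
    funext z; simp [ContinuousLinearMap.smulRight_apply]
  rw [show (IsCompactOperator (f.smulRight y)) = IsCompactOperator ((fun t : ℝ => t • y) ∘ ⇑f)
    from congrArg _ hcoe]
  exact hf.continuous_comp (continuous_id.smul continuous_const)

/-- An operator whose images of bounded sequences have Cauchy subsequences is compact. -/
lemma aux_compact_of_cauchy [CompleteSpace Y] (T : X →L[ℝ] Y)
    (H : ∀ x : ℕ → X, IsBounded (Set.range x) →
      ∃ s : ℕ → ℕ, StrictMono s ∧ CauchySeq (fun n => T (x (s n)))) :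
    IsCompactOperator T := by
  have hseq : IsSeqCompact (closure (⇑T '' Metric.ball 0 1)) := by
    intro y hy
    have happrox : ∀ n : ℕ, ∃ z : X, ‖z‖ < 1 ∧ dist (y n) (T z) < 1 / (n + 1) := by
      intro n
      have hyn := hy n
      rw [Metric.mem_closure_iff] at hyn
      obtain ⟨b, hb, hbd⟩ := hyn (1 / (n + 1)) (by positivity)
      obtain ⟨z, hz, rfl⟩ := hb
      exact ⟨z, mem_ball_zero_iff.1 hz, hbd⟩
    choose z hz1 hz2 using happrox
    have hzb : IsBounded (Set.range z) := by
      refine isBounded_iff_forall_norm_le.2 ⟨1, ?_⟩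
      rintro w ⟨n, rfl⟩; exact (hz1 n).le
    obtain ⟨s, hs, hcz⟩ := H z hzb
    obtain ⟨a, ha⟩ := cauchySeq_tendsto_of_complete hcz
    refine ⟨a, ?_, s, hs, ?_⟩
    · exact mem_closure_of_tendsto ha (Filter.Eventually.of_forall fun n =>
        ⟨z (s n), mem_ball_zero_iff.2 (hz1 (s n)), rfl⟩)
    · refine ha.congr_dist ?_
      refine squeeze_zero (fun n => dist_nonneg) (fun n => ?_)
        tendsto_one_div_add_atTop_nhds_zero_nat
      have hle : (1 : ℝ) / (s n + 1) ≤ 1 / (n + 1) := by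
        have : (n : ℝ) + 1 ≤ (s n : ℝ) + 1 := by
          exact_mod_cast Nat.succ_le_succ hs.le_apply
        exact one_div_le_one_div_of_le (by positivity) this
      calc dist (T (z (s n))) ((y ∘ s) n) = dist (y (s n)) (T (z (s n))) := dist_comm _ _
        _ ≤ 1 / (s n + 1) := (hz2 (s n)).le
        _ ≤ 1 / (n + 1) := hle
  have hcpt : IsCompact (closure (⇑T '' Metric.ball 0 1)) := hseq.isCompact
  exact ⟨_, hcpt, Filter.mem_of_superset (Metric.ball_mem_nhds 0 one_pos)
    fun x hx => subset_closure ⟨x, hx, rfl⟩⟩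

end Aux
/-- If there is a Banach space `Y` such that every uniformly
`p`-convergent subset of `K(X,Y)` is equicompact, then `C_p(X,Y) = K(X,Y)`. -/
theorem stmt14 [NormedAddCommGroup X] [NormedSpace ℝ X] [CompleteSpace X]
    [NormedAddCommGroup Y] [NormedSpace ℝ Y] [CompleteSpace Y]
    (p : ℝ≥0∞) (hp : 1 ≤ p) (hp' : p ≠ ⊤)
    (h : ∀ M : Set (X →L[ℝ] Y), (∀ T ∈ M, IsCompactOperator T) →
      UnifPConvergent p M → Equicompact M) :
    {T : X →L[ℝ] Y | PConvergentOp p T} = {T : X →L[ℝ] Y | IsCompactOperator T} := by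
  have hp0 : p ≠ 0 := (lt_of_lt_of_le zero_lt_one hp).ne'
  ext T
  simp only [Set.mem_setOf_eq]
  constructor
  · -- p-convergent implies compact, using the hypothesis `h`
    intro hT
    by_cases hY : ∃ y₀ : Y, y₀ ≠ 0
    · obtain ⟨y₀, hy₀⟩ := hY
      have hy₀' : (0 : ℝ) < ‖y₀‖ := norm_pos_iff.2 hy₀
      set M : Set (X →L[ℝ] Y) :=
        {S | ∃ φ : Y →L[ℝ] ℝ, ‖φ‖ ≤ 1 ∧ S = (φ.comp T).smulRight y₀} with hM
      have hcpt : ∀ S ∈ M, IsCompactOperator S := by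
        rintro S ⟨φ, -, rfl⟩
        exact aux_rank_one_compact _ _
      have hunif : UnifPConvergent p M := by
        intro x hx ε hε
        have htend := hT x hx
        rw [Metric.tendsto_atTop] at htend
        obtain ⟨N, hN⟩ := htend (ε / (‖y₀‖ + 1)) (by positivity)
        refine ⟨N, fun n hn S hS => ?_⟩
        obtain ⟨φ, hφ, rfl⟩ := hS
        have h1 : ‖((φ.comp T).smulRight y₀) (x n)‖ = ‖φ (T (x n))‖ * ‖y₀‖ := by
          rw [ContinuousLinearMap.smulRight_apply, norm_smul]
          rfl
        have h2 : ‖φ (T (x n))‖ ≤ ‖T (x n)‖ := by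
          calc ‖φ (T (x n))‖ ≤ ‖φ‖ * ‖T (x n)‖ := φ.le_opNorm _
            _ ≤ 1 * ‖T (x n)‖ := mul_le_mul_of_nonneg_right hφ (norm_nonneg _)
            _ = ‖T (x n)‖ := one_mul _
        have h3 := hN n hn
        rw [Real.dist_eq, sub_zero, abs_of_nonneg (norm_nonneg _)] at h3
        have h4 : ‖T (x n)‖ * ‖y₀‖ < ε := by
          have h5 : ‖T (x n)‖ * (‖y₀‖ + 1) < ε := by
            rw [lt_div_iff₀ (by positivity : (0:ℝ) < ‖y₀‖ + 1)] at h3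
            linarith
          nlinarith [norm_nonneg (T (x n)), norm_nonneg y₀]
        calc ‖((φ.comp T).smulRight y₀) (x n)‖ = ‖φ (T (x n))‖ * ‖y₀‖ := h1
          _ ≤ ‖T (x n)‖ * ‖y₀‖ := mul_le_mul_of_nonneg_right h2 (norm_nonneg _)
          _ < ε := h4
      have heq := h M hcpt hunif
      refine aux_compact_of_cauchy T fun x hx => ?_
      obtain ⟨s, hs, g, hg⟩ := heq x hx
      refine ⟨s, hs, ?_⟩
      rw [Metric.cauchySeq_iff]
      intro ε hε
      rw [Metric.tendstoUniformlyOn_iff] at hg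
      have hδ : (0 : ℝ) < ε * ‖y₀‖ / 4 := by positivity
      obtain ⟨N, hN⟩ := (hg _ hδ).exists_forall_of_atTop
      refine ⟨N, fun m hm n hn => ?_⟩
      set v := T (x (s m)) - T (x (s n)) with hv
      obtain ⟨φ, hφ, hφv⟩ := exists_dual_vector'' ℝ v
      set S := (φ.comp T).smulRight y₀ with hS
      have hSM : S ∈ M := ⟨φ, hφ, rfl⟩
      have h1 := hN m hm S hSM
      have h2 := hN n hn S hSM
      have hφvnorm : ‖φ v‖ = ‖v‖ := by
        rw [hφv]; simp
      have hdiff : S (x (s m)) - S (x (s n)) = φ v • y₀ := by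
        simp only [hS, ContinuousLinearMap.smulRight_apply, ContinuousLinearMap.comp_apply,
          hv, map_sub, sub_smul]
      have hkey : ‖v‖ * ‖y₀‖ < ε * ‖y₀‖ / 2 := by
        have h3 : ‖S (x (s m)) - S (x (s n))‖ = ‖v‖ * ‖y₀‖ := by
          rw [hdiff, norm_smul, hφvnorm]
        have h4 : ‖S (x (s m)) - S (x (s n))‖ ≤
            dist (g S) (S (x (s m))) + dist (g S) (S (x (s n))) := by
          rw [← dist_eq_norm]
          calc dist (S (x (s m))) (S (x (s n)))
              ≤ dist (S (x (s m))) (g S) + dist (g S) (S (x (s n))) := dist_triangle _ _ _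
            _ = dist (g S) (S (x (s m))) + dist (g S) (S (x (s n))) := by rw [dist_comm]
        linarith
      have h5 : ‖v‖ < ε / 2 := by
        have := (mul_lt_mul_iff_of_pos_right hy₀').1 (by linarith [hkey] : ‖v‖ * ‖y₀‖ < ε / 2 * ‖y₀‖)
        exact this
      rw [dist_eq_norm]
      calc ‖T (x (s m)) - T (x (s n))‖ = ‖v‖ := rfl
        _ < ε / 2 := h5
        _ < ε := by linarith
    · -- Y is trivial
      push_neg at hY
      refine ⟨{0}, isCompact_singleton, ?_⟩
      have : (⇑T) ⁻¹' {0} = Set.univ := by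
        ext x; simp [hY (T x)]
      rw [this]
      exact Filter.univ_mem
  · -- compact implies p-convergent
    intro hT x hx
    have hnull : ∀ f : X →L[ℝ] ℝ, Tendsto (fun n => f (x n)) atTop (𝓝 0) :=
      aux_weakly_null hp0 hp' hx
    have hb : IsBounded (Set.range x) := aux_bounded hnull
    by_contra hcon
    rw [Metric.tendsto_atTop] at hcon
    push_neg at hcon
    obtain ⟨ε, hε, hfr⟩ := hcon
    obtain ⟨s, hs, hsP⟩ := Filter.extraction_of_frequently_atTop
      (Filter.frequently_atTop.2 fun N => by
        obtain ⟨n, hn, hn'⟩ := hfr N; exact ⟨n, hn, hn'⟩)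
    have hεle : ∀ n, ε ≤ ‖T (x (s n))‖ := by
      intro n
      have := hsP n
      rw [Real.dist_eq, sub_zero, abs_of_nonneg (norm_nonneg _)] at this
      linarith
    have hxsb : IsBounded (Set.range fun n => x (s n)) :=
      hb.subset (Set.range_comp_subset_range s x)
    obtain ⟨t, ht, y, hy⟩ := aux_subseq_conv hT hxsb
    have hy0 : y = 0 := by
      refine NormedSpace.eq_zero_of_forall_dual_eq_zero ℝ fun φ => ?_
      have h1 : Tendsto (fun n => φ (T (x (s (t n))))) atTop (𝓝 (φ y)) :=
        (φ.continuous.tendsto y).comp hy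
      have h2 : Tendsto (fun n => φ (T (x (s (t n))))) atTop (𝓝 0) := by
        have h3 := hnull (φ.comp T)
        exact h3.comp ((hs.comp ht).tendsto_atTop)
      exact tendsto_nhds_unique h1 h2
    have hnorm : Tendsto (fun n => ‖T (x (s (t n)))‖) atTop (𝓝 ‖y‖) := hy.norm
    have hεy : ε ≤ ‖y‖ := le_of_tendsto_of_tendsto' tendsto_const_nhds hnorm
      fun n => hεle (t n)
    rw [hy0, norm_zero] at hεy
    linarith
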